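/- arXiv:2511.16281 — 9 statements merged into one kernel-verified Lean document; each statement's English description precedes it below -/
import Mathlib

section
/- The denominator height H on Gaussian integers is sub-multiplicative: for all α, γ ∈ ℤ[i], H(αγ) ≤ H(α)·H(γ). -/
/-- The denominator height of a Gaussian integer:
`H(a+bi) = (a² + b²) / gcd(a,b)`, with `H(0) = 0`. -/
def denomHeight (α : GaussianInt) : ℤ := α.norm / (Int.gcd α.re α.im : ℤ)

/-- The denominator height is sub-multiplicative on `ℤ[i]`. -/
theorem stmt_1 (α γ : GaussianInt) :
    denomHeight (α * γ) ≤ denomHeight α * denomHeight γ := by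
  by_cases hα : α = 0
  · simp [hα, denomHeight, Zsqrtd.norm]
  by_cases hγ : γ = 0
  · simp [hγ, denomHeight, Zsqrtd.norm]
  have hαγ : α * γ ≠ 0 := mul_ne_zero hα hγ
  set g1 : ℤ := (Int.gcd α.re α.im : ℤ) with hg1def
  set g2 : ℤ := (Int.gcd γ.re γ.im : ℤ) with hg2def
  set gp : ℤ := (Int.gcd (α*γ).re (α*γ).im : ℤ) with hgpdef
  have hpos : ∀ z : GaussianInt, z ≠ 0 → (0:ℤ) < (Int.gcd z.re z.im : ℤ) := by
    intro z hz
    have h0 : Int.gcd z.re z.im ≠ 0 := by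
      intro h
      obtain ⟨h1, h2⟩ := Int.gcd_eq_zero_iff.mp h
      exact hz (by ext <;> simp [h1, h2])
    exact_mod_cast Nat.pos_of_ne_zero h0
  have hg1 : 0 < g1 := hpos α hα
  have hg2 : 0 < g2 := hpos γ hγ
  have hgp : 0 < gp := hpos (α*γ) hαγ
  obtain ⟨a, ha⟩ : g1 ∣ α.re := Int.gcd_dvd_left α.re α.im
  obtain ⟨b, hb⟩ : g1 ∣ α.im := Int.gcd_dvd_right α.re α.im
  obtain ⟨c, hc⟩ : g2 ∣ γ.re := Int.gcd_dvd_left γ.re γ.im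
  obtain ⟨d, hd⟩ : g2 ∣ γ.im := Int.gcd_dvd_right γ.re γ.im
  obtain ⟨p, hp⟩ : gp ∣ (α*γ).re := Int.gcd_dvd_left (α*γ).re (α*γ).im
  obtain ⟨q, hq⟩ : gp ∣ (α*γ).im := Int.gcd_dvd_right (α*γ).re (α*γ).im
  -- g1*g2 divides gp
  have hd12 : g1 * g2 ∣ gp := by
    apply Int.dvd_coe_gcd
    · exact ⟨a*c - b*d, by rw [Zsqrtd.re_mul, ha, hb, hc, hd]; ring⟩
    · exact ⟨a*d + b*c, by rw [Zsqrtd.im_mul, ha, hb, hc, hd]; ring⟩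
  obtain ⟨k, hk⟩ := hd12
  have hkpos : 0 < k := by
    by_contra h
    push_neg at h
    have h2 : g1 * g2 * k ≤ 0 :=
      mul_nonpos_of_nonneg_of_nonpos (mul_pos hg1 hg2).le h
    rw [hk] at hgp
    linarith
  -- norms
  have hn1 : α.norm = g1 * (g1 * (a*a + b*b)) := by
    simp only [Zsqrtd.norm, ha, hb]; ring
  have hn2 : γ.norm = g2 * (g2 * (c*c + d*d)) := by
    simp only [Zsqrtd.norm, hc, hd]; ring
  have hnp : (α*γ).norm = gp * (gp * (p*p + q*q)) := by
    simp only [Zsqrtd.norm, hp, hq]; ring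
  have hH1 : denomHeight α = g1 * (a*a + b*b) := by
    unfold denomHeight
    rw [← hg1def, hn1]
    exact Int.mul_ediv_cancel_left _ hg1.ne'
  have hH2 : denomHeight γ = g2 * (c*c + d*d) := by
    unfold denomHeight
    rw [← hg2def, hn2]
    exact Int.mul_ediv_cancel_left _ hg2.ne'
  have hHp : denomHeight (α*γ) = gp * (p*p + q*q) := by
    unfold denomHeight
    rw [← hgpdef, hnp]
    exact Int.mul_ediv_cancel_left _ hgp.ne'
  have hnm : (α*γ).norm = α.norm * γ.norm := Zsqrtd.norm_mul α γ
  rw [hn1, hn2, hnp, hk] at hnm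
  have hne : g1 * g2 ≠ 0 := (mul_pos hg1 hg2).ne'
  have key : k * k * (p*p + q*q) = (a*a + b*b) * (c*c + d*d) := by
    apply mul_left_cancel₀ hne
    apply mul_left_cancel₀ hne
    linear_combination hnm
  rw [hHp, hH1, hH2, hk]
  have hX : (0:ℤ) ≤ p*p + q*q := add_nonneg (mul_self_nonneg p) (mul_self_nonneg q)
  have hk1 : (1:ℤ) ≤ k := hkpos
  have inner : k * (p*p + q*q) ≤ k * k * (p*p + q*q) := by
    nlinarith [mul_nonneg (mul_nonneg (by linarith : (0:ℤ) ≤ k - 1) hkpos.le) hX]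
  have final := mul_le_mul_of_nonneg_left inner (mul_pos hg1 hg2).le
  calc g1 * g2 * k * (p*p + q*q) = g1 * g2 * (k * (p*p + q*q)) := by ring
    _ ≤ g1 * g2 * (k * k * (p*p + q*q)) := final
    _ = g1 * (a*a + b*b) * (g2 * (c*c + d*d)) := by linear_combination (g1*g2) * key
end

section
/- Let E ⊂ ℝ^d be a compact set satisfying 𝒩_δ(E) ≤ C'·δ^{−s} for all 0 < δ < 1 (where 𝒩 is the covering number by closed balls of radius δ). Then there is a constant C such that for every N ∈ ℕ, the number of rational points p/q ∈ E with p ∈ ℤ^d and 1 ≤ q ≤ N is at most C·N^{min{2s, s+1}}. -/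
open Metric Set

theorem myaux_ncard_biUnion_le {α β : Type*} (t : Finset β) (B : β → Set α) :
    (⋃ y ∈ t, B y).ncard ≤ ∑ y ∈ t, (B y).ncard := by
  classical
  induction t using Finset.induction_on with
  | empty => simp
  | insert _ _ hnotmem ih =>
    rename_i a u
    rw [Finset.sum_insert hnotmem, Finset.set_biUnion_insert]
    exact le_trans (Set.ncard_union_le _ _) (Nat.add_le_add_left ih _)

theorem myaux_coord {d : ℕ} (x y : EuclideanSpace ℝ (Fin d)) (i : Fin d) :
    |x i - y i| ≤ dist x y := by
  rw [EuclideanSpace.dist_eq, show |x i - y i| = Real.sqrt (dist (x i) (y i) ^ 2) by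
    rw [Real.sqrt_sq dist_nonneg, Real.dist_eq]]
  exact Real.sqrt_le_sqrt (Finset.single_le_sum
    (f := fun j => dist (x j) (y j) ^ 2) (fun j _ => sq_nonneg _) (Finset.mem_univ i))

/-- Let `E ⊆ ℝ^d` be compact with covering numbers `𝒩_δ(E) ≤ C'·δ^{−s}` for all
`0 < δ < 1`. Then there is `C > 0` such that for every `N ∈ ℕ`, the number of rational
points `p/q ∈ E` with `p ∈ ℤ^d` and `1 ≤ q ≤ N` is at most `C·N^{min{2s, s+1}}`. -/
theorem stmt_5 {d : ℕ} (E : Set (EuclideanSpace ℝ (Fin d))) (hE : IsCompact E)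
    (s C' : ℝ) (hs : 0 < s) (hC' : 0 < C')
    (hcov : ∀ δ : ℝ, 0 < δ → δ < 1 → ∃ t : Finset (EuclideanSpace ℝ (Fin d)),
      (t.card : ℝ) ≤ C' * δ ^ (-s) ∧ E ⊆ ⋃ y ∈ t, closedBall y δ) :
    ∃ C : ℝ, 0 < C ∧ ∀ N : ℕ, 0 < N →
      (Set.ncard {x : EuclideanSpace ℝ (Fin d) |
          x ∈ E ∧ ∃ p : Fin d → ℤ, ∃ q : ℕ, 1 ≤ q ∧ q ≤ N ∧
            ∀ i, x i = (p i : ℝ) / (q : ℝ)} : ℝ) ≤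
        C * (N : ℝ) ^ (min (2 * s) (s + 1)) := by
  classical
  set S : ℕ → Set (EuclideanSpace ℝ (Fin d)) := fun N =>
    {x : EuclideanSpace ℝ (Fin d) |
      x ∈ E ∧ ∃ p : Fin d → ℤ, ∃ q : ℕ, 1 ≤ q ∧ q ≤ N ∧
        ∀ i, x i = (p i : ℝ) / (q : ℝ)} with hS
  -- separation
  have hsep : ∀ N : ℕ, 0 < N → ∀ x ∈ S N, ∀ z ∈ S N, x ≠ z →
      1 / (N : ℝ) ^ 2 ≤ dist x z := by
    intro N hN x hx z hz hne
    obtain ⟨-, p, q, hq1, hqN, hxp⟩ := hx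
    obtain ⟨-, p', q', hq1', hqN', hzp⟩ := hz
    have hqpos : (0:ℝ) < q := by exact_mod_cast hq1
    have hqpos' : (0:ℝ) < q' := by exact_mod_cast hq1'
    have hNpos : (0:ℝ) < N := by exact_mod_cast hN
    obtain ⟨i, hi⟩ : ∃ i, x i ≠ z i := by
      by_contra h
      push_neg at h
      exact hne (PiLp.ext h)
    set n : ℤ := p i * q' - p' i * q with hn
    have key : x i - z i = (n : ℝ) / ((q:ℝ) * (q':ℝ)) := by
      rw [hxp i, hzp i]
      push_cast [hn]
      field_simp
    have hn0 : n ≠ 0 := by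
      intro h0
      apply hi
      rw [hxp i, hzp i, div_eq_div_iff hqpos.ne' hqpos'.ne']
      have : ((p i * q' - p' i * q : ℤ) : ℝ) = 0 := by rw [← hn, h0]; simp
      push_cast at this
      linarith
    have h1n : (1:ℝ) ≤ |(n:ℝ)| := by
      rw [← Int.cast_abs]
      exact_mod_cast Int.one_le_abs hn0
    have hqq : (q:ℝ) * (q':ℝ) ≤ (N:ℝ) ^ 2 := by
      have h1 : (q:ℝ) ≤ N := by exact_mod_cast hqN
      have h2 : (q':ℝ) ≤ N := by exact_mod_cast hqN'
      nlinarith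
    have : 1 / (N:ℝ) ^ 2 ≤ |(n:ℝ)| / ((q:ℝ) * (q':ℝ)) :=
      div_le_div₀ (abs_nonneg _) h1n (by positivity) hqq
    calc 1 / (N:ℝ) ^ 2 ≤ |(n:ℝ)| / ((q:ℝ) * (q':ℝ)) := this
      _ = |x i - z i| := by
          rw [key, abs_div, abs_of_pos (by positivity : (0:ℝ) < (q:ℝ) * (q':ℝ))]
      _ ≤ dist x z := myaux_coord x z i
  rcases le_or_gt s 1 with hs1 | hs1
  · -- case s ≤ 1 : exponent 2s
    have hmin : min (2 * s) (s + 1) = 2 * s := min_eq_left (by linarith)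
    refine ⟨C' * 3 ^ s, by positivity, fun N hN => ?_⟩
    have hNpos : (0:ℝ) < N := by exact_mod_cast hN
    have hN1 : (1:ℝ) ≤ N := by exact_mod_cast hN
    set δ : ℝ := (3 * (N:ℝ) ^ 2)⁻¹ with hδ
    have hδpos : 0 < δ := by positivity
    have hδlt : δ < 1 := by
      rw [hδ]
      rw [inv_lt_one_iff₀]
      right; nlinarith
    obtain ⟨t, htcard, htcov⟩ := hcov δ hδpos hδlt
    have hsub : S N ⊆ ⋃ y ∈ t, closedBall y δ := fun x hx => htcov hx.1
    -- each ball contains at most one point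
    have hone : ∀ y ∈ t, (S N ∩ closedBall y δ).ncard ≤ 1 := by
      intro y _
      have hss : (S N ∩ closedBall y δ).Subsingleton := by
        intro x hx z hz
        by_contra hne
        have h1 := hsep N hN x hx.1 z hz.1 hne
        have h2 : dist x z ≤ 2 * δ := by
          have hxy : dist x y ≤ δ := mem_closedBall.mp hx.2
          have hzy : dist z y ≤ δ := mem_closedBall.mp hz.2
          calc dist x z ≤ dist x y + dist y z := dist_triangle x y z
            _ = dist x y + dist z y := by rw [dist_comm y z]
            _ ≤ 2 * δ := by linarith
        have hlt : 2 * δ < 1 / (N:ℝ) ^ 2 := by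
          rw [hδ]
          rw [div_eq_mul_inv, one_mul]
          have hA : (0:ℝ) < (N:ℝ) ^ 2 := by positivity
          rw [mul_inv_lt_iff₀ (by positivity)]
          have : ((N:ℝ) ^ 2)⁻¹ * (3 * (N:ℝ) ^ 2) = 3 := by field_simp
          rw [this]; norm_num
        linarith
      exact (Set.ncard_le_one hss.finite).mpr (fun a ha b hb => hss ha hb)
    have hcount : (S N).ncard ≤ t.card := by
      have heq : S N = ⋃ y ∈ t, (S N ∩ closedBall y δ) := by
        rw [← Set.inter_iUnion₂]
        exact (Set.inter_eq_left.mpr hsub).symm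
      calc (S N).ncard = (⋃ y ∈ t, (S N ∩ closedBall y δ)).ncard := by rw [← heq]
        _ ≤ ∑ y ∈ t, (S N ∩ closedBall y δ).ncard := myaux_ncard_biUnion_le _ _
        _ ≤ ∑ _y ∈ t, 1 := Finset.sum_le_sum hone
        _ = t.card := by simp
    have hrpow : δ ^ (-s) = 3 ^ s * (N:ℝ) ^ (2 * s) := by
      have h3A : (0:ℝ) ≤ 3 * (N:ℝ) ^ 2 := by positivity
      rw [hδ, Real.inv_rpow h3A, Real.rpow_neg h3A, inv_inv,
        Real.mul_rpow (by norm_num) (by positivity),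
        ← Real.rpow_natCast (N:ℝ) 2, ← Real.rpow_mul (Nat.cast_nonneg N)]
      norm_num
    calc ((S N).ncard : ℝ) ≤ (t.card : ℝ) := Nat.cast_le.mpr hcount
      _ ≤ C' * δ ^ (-s) := htcard
      _ = C' * 3 ^ s * (N:ℝ) ^ (min (2*s) (s+1)) := by rw [hrpow, hmin]; ring
  · -- case s > 1 : exponent s + 1
    have hmin : min (2 * s) (s + 1) = s + 1 := min_eq_right (by linarith)
    refine ⟨C' * 2 ^ s * 2 ^ d, by positivity, fun N hN => ?_⟩
    have hNpos : (0:ℝ) < N := by exact_mod_cast hN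
    have hN1 : (1:ℝ) ≤ N := by exact_mod_cast hN
    set δ : ℝ := (2 * (N:ℝ))⁻¹ with hδ
    have hδpos : 0 < δ := by positivity
    have hδlt : δ < 1 := by
      rw [hδ, inv_lt_one_iff₀]; right; linarith
    obtain ⟨t, htcard, htcov⟩ := hcov δ hδpos hδlt
    have hsub : S N ⊆ ⋃ y ∈ t, closedBall y δ := fun x hx => htcov hx.1
    have hw : ∀ x, x ∈ S N → ∃ pq : (Fin d → ℤ) × ℕ,
        1 ≤ pq.2 ∧ pq.2 ≤ N ∧ ∀ i, x i = (pq.1 i : ℝ) / (pq.2 : ℝ) := by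
      intro x hx
      obtain ⟨-, p, q, h1, h2, h3⟩ := hx
      exact ⟨(p, q), h1, h2, h3⟩
    choose! f hf1 hf2 hf3 using hw
    have hball : ∀ y ∈ t, (S N ∩ closedBall y δ).ncard ≤ N * 2 ^ d := by
      intro y _
      set T : Finset (ℕ × (Fin d → ℤ)) := (Finset.Icc 1 N).biUnion (fun q =>
        {q} ×ˢ Fintype.piFinset (fun i =>
          Finset.Icc ⌈(q:ℝ) * (y i - δ)⌉ ⌊(q:ℝ) * (y i + δ)⌋)) with hT
      set F : EuclideanSpace ℝ (Fin d) → ℕ × (Fin d → ℤ) :=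
        fun x => ((f x).2, (f x).1) with hF
      have hinj : Set.InjOn F (S N ∩ closedBall y δ) := by
        intro x hx z hz hFeq
        have h1 : (f x).2 = (f z).2 := congrArg Prod.fst hFeq
        have h2 : (f x).1 = (f z).1 := congrArg Prod.snd hFeq
        ext i
        rw [hf3 x hx.1 i, hf3 z hz.1 i, h1, h2]
      have himg : F '' (S N ∩ closedBall y δ) ⊆ ↑T := by
        rintro w ⟨x, hx, rfl⟩
        have hq1 := hf1 x hx.1
        have hqN := hf2 x hx.1
        have hx3 := hf3 x hx.1
        set q := (f x).2 with hqdef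
        set p := (f x).1 with hpdef
        have hqpos : (0:ℝ) < q := by exact_mod_cast hq1
        have hdist : dist x y ≤ δ := mem_closedBall.mp hx.2
        rw [Finset.mem_coe, hT, Finset.mem_biUnion]
        refine ⟨q, Finset.mem_Icc.mpr ⟨hq1, hqN⟩, ?_⟩
        rw [Finset.mem_product]
        refine ⟨Finset.mem_singleton_self q, ?_⟩
        rw [Fintype.mem_piFinset]
        intro i
        have hpi : (p i : ℝ) = q * x i := by
          rw [hx3 i]; field_simp
        have habs : |x i - y i| ≤ δ := le_trans (myaux_coord x y i) hdist
        have hxi1 : y i - δ ≤ x i := by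
          have h := abs_sub_le_iff.mp habs
          linarith [h.2]
        have hxi2 : x i ≤ y i + δ := by
          have h := abs_sub_le_iff.mp habs
          linarith [h.1]
        rw [Finset.mem_Icc]
        constructor
        · rw [Int.ceil_le, hpi]
          exact mul_le_mul_of_nonneg_left hxi1 (le_of_lt hqpos)
        · rw [Int.le_floor, hpi]
          exact mul_le_mul_of_nonneg_left hxi2 (le_of_lt hqpos)
      have hTcard : T.card ≤ N * 2 ^ d := by
        rw [hT]
        refine le_trans Finset.card_biUnion_le ?_
        have hone : ∀ q ∈ Finset.Icc 1 N,
            ({q} ×ˢ Fintype.piFinset (fun i =>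
              Finset.Icc ⌈(q:ℝ) * (y i - δ)⌉ ⌊(q:ℝ) * (y i + δ)⌋)).card ≤ 2 ^ d := by
          intro q hq
          obtain ⟨hq1, hqN⟩ := Finset.mem_Icc.mp hq
          rw [Finset.card_product, Finset.card_singleton, one_mul,
            Fintype.card_piFinset]
          have hfac : ∀ i : Fin d,
              (Finset.Icc ⌈(q:ℝ) * (y i - δ)⌉ ⌊(q:ℝ) * (y i + δ)⌋).card ≤ 2 := by
            intro i
            rw [Int.card_Icc]
            apply Int.toNat_le.mpr
            have hdiff : (q:ℝ) * (y i + δ) ≤ (q:ℝ) * (y i - δ) + 1 := by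
              have hqN' : (q:ℝ) ≤ N := by exact_mod_cast hqN
              have : (q:ℝ) * (2 * δ) ≤ 1 := by
                rw [hδ]
                have h2 : (2:ℝ) * (2 * (N:ℝ))⁻¹ = (N:ℝ)⁻¹ := by field_simp
                rw [h2, ← div_eq_mul_inv, div_le_one hNpos]
                exact hqN'
              nlinarith
            have hfl : ⌊(q:ℝ) * (y i + δ)⌋ ≤ ⌊(q:ℝ) * (y i - δ)⌋ + 1 := by
              rw [show (⌊(q:ℝ) * (y i - δ)⌋ + 1 : ℤ) = ⌊(q:ℝ) * (y i - δ) + 1⌋ by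
                rw [Int.floor_add_one]]
              exact Int.floor_le_floor hdiff
            have hfc : ⌊(q:ℝ) * (y i - δ)⌋ ≤ ⌈(q:ℝ) * (y i - δ)⌉ := Int.floor_le_ceil _
            omega
          calc (∏ i, (Finset.Icc ⌈(q:ℝ) * (y i - δ)⌉ ⌊(q:ℝ) * (y i + δ)⌋).card)
              ≤ ∏ _i : Fin d, 2 := Finset.prod_le_prod' (fun i _ => hfac i)
            _ = 2 ^ d := by simp
        calc ∑ q ∈ Finset.Icc 1 N, ({q} ×ˢ Fintype.piFinset (fun i =>
              Finset.Icc ⌈(q:ℝ) * (y i - δ)⌉ ⌊(q:ℝ) * (y i + δ)⌋)).card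
            ≤ ∑ _q ∈ Finset.Icc 1 N, 2 ^ d := Finset.sum_le_sum hone
          _ = N * 2 ^ d := by simp [Nat.card_Icc]
      calc (S N ∩ closedBall y δ).ncard = (F '' (S N ∩ closedBall y δ)).ncard :=
            (Set.ncard_image_of_injOn hinj).symm
        _ ≤ (↑T : Set (ℕ × (Fin d → ℤ))).ncard := Set.ncard_le_ncard himg T.finite_toSet
        _ = T.card := Set.ncard_coe_finset T
        _ ≤ N * 2 ^ d := hTcard
    have hcount : (S N).ncard ≤ t.card * (N * 2 ^ d) := by
      have heq : S N = ⋃ y ∈ t, (S N ∩ closedBall y δ) := by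
        rw [← Set.inter_iUnion₂]
        exact (Set.inter_eq_left.mpr hsub).symm
      calc (S N).ncard = (⋃ y ∈ t, (S N ∩ closedBall y δ)).ncard := by rw [← heq]
        _ ≤ ∑ y ∈ t, (S N ∩ closedBall y δ).ncard := myaux_ncard_biUnion_le _ _
        _ ≤ ∑ _y ∈ t, N * 2 ^ d := Finset.sum_le_sum hball
        _ = t.card * (N * 2 ^ d) := by rw [Finset.sum_const, smul_eq_mul]
    have hrpow : δ ^ (-s) = 2 ^ s * (N:ℝ) ^ s := by
      have h2N : (0:ℝ) ≤ 2 * N := by positivity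
      rw [hδ, Real.inv_rpow h2N, Real.rpow_neg h2N, inv_inv,
        Real.mul_rpow (by norm_num) (Nat.cast_nonneg N)]
    have hpow1 : (N:ℝ) ^ (s + 1) = (N:ℝ) ^ s * N :=
      Real.rpow_add_one (by positivity) s
    calc ((S N).ncard : ℝ) ≤ ((t.card * (N * 2 ^ d) : ℕ) : ℝ) := Nat.cast_le.mpr hcount
      _ = (t.card : ℝ) * ((N:ℝ) * 2 ^ d) := by push_cast; ring
      _ ≤ (C' * δ ^ (-s)) * ((N:ℝ) * 2 ^ d) :=
          mul_le_mul_of_nonneg_right htcard (by positivity)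
      _ = C' * 2 ^ s * 2 ^ d * (N:ℝ) ^ (s + 1) := by rw [hrpow, hpow1]; ring
      _ = C' * 2 ^ s * 2 ^ d * (N:ℝ) ^ (min (2 * s) (s + 1)) := by rw [hmin]
end

section
/- Let β ∈ ℤ[i]\ℤ with |β| > 1 and let D ⊂ ℚ(i) be finite with at least two elements such that the self-similar set K = {∑_{j≥1} d_j/β^j : d_j ∈ D} is not a singleton. Then K is not contained in any (real) line in ℂ. -/
open Set

/-- Let `β ∈ ℤ[i] \ ℤ` with `|β| > 1`, and let `D ⊆ ℚ(i)` be finite with at least two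
elements such that `K = {∑_{j≥1} d_j/β^j : d_j ∈ D}` is not a singleton. Then `K` is not
contained in any real line in `ℂ`. -/
theorem stmt_6 (β : GaussianInt) (hβZ : β.im ≠ 0)
    (hβ : 1 < ‖GaussianInt.toComplex β‖)
    (D : Finset ℂ)
    (hD : ∀ t ∈ D, ∃ ω γ : GaussianInt, γ ≠ 0 ∧
      t = GaussianInt.toComplex ω / GaussianInt.toComplex γ)
    (hDcard : 2 ≤ D.card)
    (K : Set ℂ)
    (hK : K = {z : ℂ | ∃ f : ℕ → ℂ, (∀ j, f j ∈ D) ∧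
      z = ∑' j : ℕ, f j / (GaussianInt.toComplex β) ^ (j + 1)})
    (hKsing : ¬ ∃ z : ℂ, K = {z}) :
    ¬ ∃ a b : ℂ, b ≠ 0 ∧ K ⊆ {w : ℂ | ∃ t : ℝ, w = a + (t : ℂ) * b} := by
  rintro ⟨a, b, hb, hsub⟩
  set β' : ℂ := GaussianInt.toComplex β with hβ'
  have hβ'0 : β' ≠ 0 := by
    intro h
    rw [h] at hβ
    simp at hβ
    linarith
  -- D nonempty
  have hDne : D.Nonempty := Finset.card_pos.mp (by omega)
  obtain ⟨d0, hd0⟩ := hDne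
  -- bound on digits
  obtain ⟨C, hC⟩ : ∃ C : ℝ, ∀ t ∈ D, ‖t‖ ≤ C :=
    ⟨D.sup' ⟨d0, hd0⟩ (fun t => ‖t‖), fun t ht => Finset.le_sup' _ ht⟩
  set r : ℝ := (‖β'‖)⁻¹ with hr
  have habspos : (0:ℝ) < ‖β'‖ := lt_trans one_pos hβ
  have hr0 : 0 ≤ r := inv_nonneg.mpr habspos.le
  have hr1 : r < 1 := by
    rw [hr]
    exact inv_lt_one_of_one_lt₀ hβ
  -- summability of digit series
  have hsum : ∀ f : ℕ → ℂ, (∀ j, f j ∈ D) → Summable (fun j => f j / β' ^ (j+1)) := by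
    intro f hf
    apply Summable.of_norm_bounded (g := fun j => (C * r) * r ^ j)
      ((summable_geometric_of_lt_one hr0 hr1).mul_left _)
    intro j
    have h1 : ‖f j / β' ^ (j+1)‖ = ‖f j‖ * r ^ (j+1) := by
      rw [norm_div, norm_pow, div_eq_mul_inv, ← inv_pow, hr]
    rw [h1]
    have h2 : ‖f j‖ * r ^ (j+1) ≤ C * r ^ (j+1) := by
      apply mul_le_mul_of_nonneg_right (hC _ (hf j)) (pow_nonneg hr0 _)
    calc ‖f j‖ * r ^ (j+1) ≤ C * r ^ (j+1) := h2
      _ = (C * r) * r ^ j := by ring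
  -- the shift map: z ∈ K, d ∈ D → (d + z)/β' ∈ K
  have hshift : ∀ d ∈ D, ∀ z ∈ K, (d + z) / β' ∈ K := by
    intro d hd z hz
    rw [hK] at hz ⊢
    obtain ⟨f, hf, hzf⟩ := hz
    refine ⟨fun j => if j = 0 then d else f (j - 1), fun j => ?_, ?_⟩
    · by_cases h : j = 0 <;> simp [h, hd, hf]
    · have hg : ∀ j, (if j + 1 = 0 then d else f (j + 1 - 1)) = f j := by
        intro j; simp
      have hsg : Summable (fun j => (if j = 0 then d else f (j-1)) / β' ^ (j+1)) := by
        apply hsum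
        intro j
        by_cases h : j = 0 <;> simp [h, hd, hf]
      rw [Summable.tsum_eq_zero_add hsg]
      simp only [hg]
      have htail : ∀ j : ℕ, f j / β' ^ (j + 1 + 1) = (f j / β' ^ (j+1)) * β'⁻¹ := by
        intro j
        rw [pow_succ]
        field_simp
      rw [tsum_congr htail, tsum_mul_right, ← hzf]
      norm_num
      field_simp
  -- K is nonempty
  have hK0 : (∑' j : ℕ, (d0 : ℂ) / β' ^ (j+1)) ∈ K := by
    rw [hK]
    exact ⟨fun _ => d0, fun _ => hd0, rfl⟩
  -- two distinct points of K
  obtain ⟨z, hz, w, hw, hzw⟩ : ∃ z ∈ K, ∃ w ∈ K, z ≠ w := by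
    by_contra h
    push_neg at h
    refine hKsing ⟨∑' j : ℕ, (d0 : ℂ) / β' ^ (j+1), ?_⟩
    apply Set.eq_singleton_iff_unique_mem.mpr
    exact ⟨hK0, fun x hx => h x hx _ hK0⟩
  -- line coordinates
  obtain ⟨t1, ht1⟩ := hsub hz
  obtain ⟨t2, ht2⟩ := hsub hw
  obtain ⟨s1, hs1⟩ := hsub (hshift d0 hd0 z hz)
  obtain ⟨s2, hs2⟩ := hsub (hshift d0 hd0 w hw)
  have hdiff1 : z - w = ((t1 - t2 : ℝ) : ℂ) * b := by
    rw [ht1, ht2]; push_cast; ring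
  have hdiff2 : (z - w) / β' = ((s1 - s2 : ℝ) : ℂ) * b := by
    have : (d0 + z) / β' - (d0 + w) / β' = (z - w) / β' := by
      ring
    rw [← this, hs1, hs2]; push_cast; ring
  -- t1 ≠ t2
  have ht : ((t1 - t2 : ℝ) : ℂ) ≠ 0 := by
    intro h
    apply hzw
    have := hdiff1
    rw [h, zero_mul, sub_eq_zero] at this
    exact this
  have hs : ((s1 - s2 : ℝ) : ℂ) ≠ 0 := by
    intro h
    rw [h, zero_mul, div_eq_zero_iff] at hdiff2
    rcases hdiff2 with h' | h'
    · exact hzw (sub_eq_zero.mp h')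
    · exact hβ'0 h'
  -- derive β' = real
  have hkey : ((t1 - t2 : ℝ) : ℂ) = ((s1 - s2 : ℝ) : ℂ) * β' := by
    have h1 : ((t1 - t2 : ℝ) : ℂ) * b = (((s1 - s2 : ℝ) : ℂ) * β') * b := by
      rw [← hdiff1]
      calc z - w = (z - w) / β' * β' := by field_simp
        _ = _ := by rw [hdiff2]; ring
    exact mul_right_cancel₀ hb h1
  have him : β'.im = 0 := by
    have h := congrArg Complex.im hkey
    simp [Complex.ofReal_im, Complex.mul_im] at h
    rcases h with h | h
    · exact absurd (by exact_mod_cast Complex.ofReal_eq_zero.mpr (by exact_mod_cast h) : ((s1 - s2 : ℝ) : ℂ) = 0) hs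
    · exact h
  have : (β.im : ℝ) = 0 := by
    rw [GaussianInt.intCast_im] ; exact him
  exact hβZ (by exact_mod_cast this)
end

section
/- Let α ∈ ℤ[i] and γ ∈ ℤ ∪ iℤ be Gaussian integers. Then gcd(α, γ) = 1 in ℤ[i] if and only if gcd(N(α), N(γ)) = 1 in ℤ. -/
/-- Let `α ∈ ℤ[i]` and `γ ∈ ℤ ∪ iℤ`. Then `α` and `γ` are coprime in `ℤ[i]` if and only
if their norms are coprime in `ℤ`. -/
theorem stmt_8 (α γ : GaussianInt) (hγ : γ.im = 0 ∨ γ.re = 0) :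
    IsCoprime α γ ↔ Int.gcd (Zsqrtd.norm α) (Zsqrtd.norm γ) = 1 := by
  rw [← Int.isCoprime_iff_gcd_eq_one]
  constructor
  · intro h
    by_contra hnc
    rw [Int.isCoprime_iff_gcd_eq_one] at hnc
    obtain ⟨p, hp, hpd⟩ := Nat.exists_prime_and_dvd hnc
    have hpp : Prime (p : ℤ) := Nat.prime_iff_prime_int.mp hp
    have hpα : (p : ℤ) ∣ Zsqrtd.norm α :=
      dvd_trans (Int.natCast_dvd_natCast.mpr (hpd.trans (Nat.gcd_dvd_left _ _)))
        (Int.natAbs_dvd.mpr dvd_rfl)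
    have hpγ : (p : ℤ) ∣ Zsqrtd.norm γ :=
      dvd_trans (Int.natCast_dvd_natCast.mpr (hpd.trans (Nat.gcd_dvd_right _ _)))
        (Int.natAbs_dvd.mpr dvd_rfl)
    -- (p : ℤ[i]) divides γ
    have hpγ' : (p : GaussianInt) ∣ γ := by
      rcases hγ with h0 | h0
      · have : (p : ℤ) ∣ γ.re := by
          have : (p : ℤ) ∣ γ.re * γ.re := by
            simpa [Zsqrtd.norm, h0] using hpγ
          exact (hpp.dvd_mul.mp this).elim id id
        obtain ⟨c, hc⟩ := this
        exact ⟨(c : GaussianInt), by ext <;> simp [h0, hc]⟩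
      · have : (p : ℤ) ∣ γ.im := by
          have : (p : ℤ) ∣ γ.im * γ.im := by
            have := hpγ
            simp only [Zsqrtd.norm, h0] at this
            have h2 : (p:ℤ) ∣ -(-1 * γ.im * γ.im) := by
              simpa using this.neg_right
            simpa using h2
          exact (hpp.dvd_mul.mp this).elim id id
        obtain ⟨c, hc⟩ := this
        exact ⟨⟨0, c⟩, by ext <;> simp [h0, hc, Zsqrtd.re_mul, Zsqrtd.im_mul]⟩
    -- (p : ℤ[i]) divides α * star α
    have hpαα : (p : GaussianInt) ∣ α * star α := by
      obtain ⟨c, hc⟩ := hpα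
      exact ⟨(c : GaussianInt), by
        rw [← Zsqrtd.norm_eq_mul_conj, hc]; push_cast; ring⟩
    -- find a Gaussian prime dividing p
    have hpnu : ¬ IsUnit (p : GaussianInt) := by
      rw [← Zsqrtd.norm_eq_one_iff]
      have : Zsqrtd.norm (p : GaussianInt) = (p : ℤ) * p := by
        simp [Zsqrtd.norm]
      rw [this]
      intro hone
      have : (p : ℤ) * p = 1 ∨ (p:ℤ) * p = -1 := Int.natAbs_eq_iff.mp (by simpa using hone) |>.imp (by simp) (by simp)
      have hge : 2 ≤ p := hp.two_le
      rcases this with h1 | h1 <;> nlinarith [hge]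
    have hpne : (p : GaussianInt) ≠ 0 := by
      intro hh
      have : (p:ℤ) = 0 := by
        have := congrArg Zsqrtd.re hh
        simpa using this
      exact hp.ne_zero (by exact_mod_cast this)
    obtain ⟨π, hπirr, hπp⟩ := WfDvdMonoid.exists_irreducible_factor hpnu hpne
    have hπ : Prime π := hπirr.prime
    rcases hπ.dvd_mul.mp (hπp.trans hpαα) with hπα | hπα
    · exact hπ.not_unit (h.isUnit_of_dvd' hπα (hπp.trans hpγ'))
    · have h1 : star π ∣ α := by
        have := (starRingEnd GaussianInt).map_dvd hπα
        simpa [starRingEnd_apply, star_star] using this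
      have h2 : star π ∣ γ := by
        have := map_dvd (starRingEnd GaussianInt) hπp
        have hsp : star (p : GaussianInt) = (p : GaussianInt) := by
          ext <;> simp
        rw [show (starRingEnd GaussianInt) π = star π from rfl] at this
        rw [show (starRingEnd GaussianInt) (p : GaussianInt) = star (p:GaussianInt) from rfl, hsp] at this
        exact this.trans hpγ'
      have := h.isUnit_of_dvd' h1 h2
      exact hπ.not_unit (by simpa using this.star)
  · intro h
    have h2 : IsCoprime ((Zsqrtd.norm α : GaussianInt)) ((Zsqrtd.norm γ : GaussianInt)) :=
      h.map (Int.castRingHom GaussianInt)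
    rw [Zsqrtd.norm_eq_mul_conj, Zsqrtd.norm_eq_mul_conj] at h2
    exact (h2.of_mul_left_left).of_mul_right_left
end

section
/- Let γ = 1+i (or any associate of 1+i). Then for every n ∈ ℕ, H(γⁿ) = 2^{n − ⌊n/2⌋}; in particular H(γⁿ) ≤ 2·2^{n/2}. -/
lemma unit_cases (u : GaussianInt) (hu : IsUnit u) :
    u = ⟨1,0⟩ ∨ u = ⟨-1,0⟩ ∨ u = ⟨0,1⟩ ∨ u = ⟨0,-1⟩ := by
  have h := (Zsqrtd.norm_eq_one_iff' (by norm_num) u).mpr hu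
  rw [Zsqrtd.norm_def] at h
  have h1 : u.re * u.re + u.im * u.im = 1 := by linarith
  have hr : -1 ≤ u.re ∧ u.re ≤ 1 := by constructor <;> nlinarith
  have hi : -1 ≤ u.im ∧ u.im ≤ 1 := by constructor <;> nlinarith
  obtain ⟨hr1, hr2⟩ := hr; obtain ⟨hi1, hi2⟩ := hi
  interval_cases hre : u.re <;> interval_cases him : u.im <;>
    simp_all [Zsqrtd.ext_iff]

lemma dh_unit (u α : GaussianInt) (hu : IsUnit u) :
    denomHeight (u * α) = denomHeight α := by
  rcases unit_cases u hu with h | h | h | h <;> subst h <;>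
    simp only [denomHeight, Zsqrtd.norm_def, Zsqrtd.re_mul, Zsqrtd.im_mul] <;>
    ring_nf <;>
    rw [show ∀ a b : ℤ, Int.gcd a b = Int.gcd b a from fun a b => Int.gcd_comm a b] <;>
    simp [Int.neg_gcd, Int.gcd_neg, Int.gcd_comm]

lemma pow_two_zero (k : ℕ) : (⟨2,0⟩ : GaussianInt)^k = ⟨2^k, 0⟩ := by
  induction k with
  | zero => rfl
  | succ k ih =>
    rw [pow_succ, ih]
    simp [Zsqrtd.ext_iff, Zsqrtd.re_mul, Zsqrtd.im_mul]; ring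

lemma pow_even (k : ℕ) : (⟨1,1⟩ : GaussianInt)^(2*k) = ⟨0,1⟩^k * ⟨2^k, 0⟩ := by
  have h2 : (⟨1,1⟩ : GaussianInt)^2 = ⟨0,1⟩ * ⟨2,0⟩ := by
    simp [pow_two, Zsqrtd.ext_iff, Zsqrtd.re_mul, Zsqrtd.im_mul]
  rw [pow_mul, h2, mul_pow, pow_two_zero]

lemma i_unit : IsUnit (⟨0,1⟩ : GaussianInt) := by
  rw [← Zsqrtd.norm_eq_one_iff' (by norm_num : (-1:ℤ) ≤ 0)]
  simp [Zsqrtd.norm_def]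

lemma dh_even (k : ℕ) : denomHeight ⟨2^k, 0⟩ = 2^k := by
  simp [denomHeight, Zsqrtd.norm_def, Int.gcd]

lemma dh_odd (k : ℕ) : denomHeight ⟨2^k, 2^k⟩ = 2^(k+1) := by
  simp only [denomHeight, Zsqrtd.norm_def, Int.gcd]
  simp [Zsqrtd.norm_def, Int.gcd]
  rw [← two_mul, mul_comm ((2:ℤ)^k) (2^k), ← mul_assoc,
    Int.mul_ediv_cancel _ (by positivity), pow_succ, mul_comm]

/-- If `γ` is an associate of `1 + i`, then for every `n ≥ 1`,
`H(γⁿ) = 2^{n − ⌊n/2⌋}`; in particular `H(γⁿ) ≤ 2·2^{n/2}`. -/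
theorem stmt_12 (γ : GaussianInt) (hassoc : Associated γ (⟨1, 1⟩ : GaussianInt)) :
    ∀ n : ℕ, 0 < n →
      denomHeight (γ ^ n) = 2 ^ (n - n / 2) ∧
      ((denomHeight (γ ^ n) : ℝ)) ≤ 2 * (2 : ℝ) ^ ((n : ℝ) / 2) := by
  intro n _
  obtain ⟨u, hu⟩ := hassoc
  have hγ : γ = (⟨1,1⟩ : GaussianInt) * ↑u⁻¹ := by rw [← hu, mul_assoc]; simp
  have hiu : IsUnit ((↑u⁻¹ : GaussianInt)) := Units.isUnit _
  have main : denomHeight (γ ^ n) = 2 ^ (n - n / 2) := by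
    rcases Nat.even_or_odd n with ⟨k, hk⟩ | ⟨k, hk⟩
    · have h2k : n = 2 * k := by omega
      have hγn : γ ^ n = ((↑u⁻¹ : GaussianInt) ^ n * ⟨0,1⟩ ^ k) * ⟨2 ^ k, 0⟩ := by
        rw [hγ, mul_pow]; rw [h2k, pow_even]; ring
      rw [hγn, dh_unit _ _ (((hiu.pow n)).mul (i_unit.pow k)), dh_even,
        show n - n / 2 = k from by omega]
    · have hγn : γ ^ n = ((↑u⁻¹ : GaussianInt) ^ n * ⟨0,1⟩ ^ k) * ⟨2 ^ k, 2 ^ k⟩ := by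
        rw [hγ, mul_pow, hk, pow_succ, pow_even]
        rw [mul_assoc ((⟨0,1⟩ : GaussianInt) ^ k),
          show ((⟨2 ^ k, 0⟩ : GaussianInt) * ⟨1,1⟩) = ⟨2 ^ k, 2 ^ k⟩ from by
            simp [Zsqrtd.ext_iff, Zsqrtd.re_mul, Zsqrtd.im_mul]]
        ring
      rw [hγn, dh_unit _ _ (((hiu.pow n)).mul (i_unit.pow k)), dh_odd,
        show n - n / 2 = k + 1 from by omega]
  refine ⟨main, ?_⟩
  rw [main]
  push_cast
  have hm : 2 * (n - n / 2) ≤ n + 2 := by omega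
  have h2 : ((n - n / 2 : ℕ) : ℝ) ≤ (n : ℝ) / 2 + 1 := by
    have := (Nat.cast_le (α := ℝ)).mpr hm; push_cast at this; linarith
  calc (2:ℝ) ^ (n - n / 2) = (2:ℝ) ^ (((n - n / 2 : ℕ)) : ℝ) :=
        (Real.rpow_natCast 2 _).symm
    _ ≤ (2:ℝ) ^ ((n : ℝ) / 2 + 1) := Real.rpow_le_rpow_of_exponent_le one_le_two h2
    _ = 2 * 2 ^ ((n : ℝ) / 2) := by rw [Real.rpow_add_one (by norm_num)]; ring
end

section
/- Let γ ∈ ℤ[i] be a Gaussian prime whose norm N(γ) is a rational prime p ≡ 1 (mod 4). Then for every n ∈ ℕ, writing γⁿ = Aₙ + Bₙ i with Aₙ, Bₙ ∈ ℤ, one has gcd(Aₙ, Bₙ) = 1; consequently H(γⁿ) = N(γ)^n. -/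
/-- Let `γ ∈ ℤ[i]` be a Gaussian prime whose norm is a rational prime `p ≡ 1 (mod 4)`.
Then for every `n ≥ 1`, the real and imaginary parts of `γⁿ` are coprime; consequently
`H(γⁿ) = N(γ)ⁿ`. -/
theorem stmt_13 (γ : GaussianInt) (hγ : Irreducible γ) (p : ℕ) (hp : Nat.Prime p)
    (h1 : p % 4 = 1) (hnorm : Zsqrtd.norm γ = (p : ℤ)) :
    ∀ n : ℕ, 0 < n →
      Int.gcd ((γ ^ n).re) ((γ ^ n).im) = 1 ∧
      denomHeight (γ ^ n) = (Zsqrtd.norm γ) ^ n := by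
  have hγprime : Prime γ := hγ.prime
  have hnpow : ∀ n : ℕ, Zsqrtd.norm (γ ^ n) = (p : ℤ) ^ n := by
    intro n
    rw [show (Zsqrtd.norm (γ ^ n)) = Zsqrtd.normMonoidHom (γ ^ n) from rfl, map_pow]
    simp [Zsqrtd.normMonoidHom, hnorm]
  -- star γ is prime
  have hstarnorm : Zsqrtd.norm (star γ) = (p : ℤ) := by
    rw [← hnorm]; simp [Zsqrtd.norm_def, Zsqrtd.re_star, Zsqrtd.im_star]
  have hstarprime : Prime (star γ) := by
    have : Irreducible (star γ) := by
      constructor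
      · intro h
        exact hγ.not_isUnit (by simpa using h.star)
      · intro a b hab
        have : γ = star a * star b := by
          have := congrArg star hab; simpa using this
        rcases hγ.isUnit_or_isUnit this with h | h
        · left; simpa using h.star
        · right; simpa using h.star
    exact this.prime
  intro n hn
  have hg : Int.gcd ((γ ^ n).re) ((γ ^ n).im) = 1 := by
    by_contra hne
    obtain ⟨q, hq, hqd⟩ := Nat.exists_prime_and_dvd hne
    have hq1 : (q : ℤ) ∣ (γ ^ n).re :=
      dvd_trans (Int.natCast_dvd_natCast.mpr hqd) (Int.gcd_dvd_left _ _)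
    have hq2 : (q : ℤ) ∣ (γ ^ n).im :=
      dvd_trans (Int.natCast_dvd_natCast.mpr hqd) (Int.gcd_dvd_right _ _)
    have hqdvd : ((q : ℤ) : GaussianInt) ∣ γ ^ n := (Zsqrtd.intCast_dvd _ _).mpr ⟨hq1, hq2⟩
    -- q divides p^n by taking norms, so q = p
    obtain ⟨c, hc⟩ := id hqdvd
    have hnormeq : (p : ℤ) ^ n = (q : ℤ) * ((q : ℤ) * Zsqrtd.norm c) := by
      rw [← hnpow n, hc, Zsqrtd.norm_mul]
      have : Zsqrtd.norm ((q : ℤ) : GaussianInt) = (q : ℤ) * (q : ℤ) := by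
        simp [Zsqrtd.norm_def]
      rw [this]; ring
    have hqp : (q : ℤ) ∣ (p : ℤ) ^ n := ⟨_, hnormeq⟩
    have hqp' : q ∣ p ^ n := by exact_mod_cast hqp
    have hqeqp : q = p := (Nat.prime_dvd_prime_iff_eq hq hp).mp (hq.dvd_of_dvd_pow hqp')
    subst hqeqp
    -- now p divides γ^n, hence star γ ∣ γ^n, hence star γ ∣ γ
    have hsp : star γ ∣ ((q : ℤ) : GaussianInt) := by
      refine ⟨γ, ?_⟩
      rw [← hnorm, Zsqrtd.norm_eq_mul_conj]; ring
    have hsγn : star γ ∣ γ ^ n := hsp.trans hqdvd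
    obtain ⟨u, hu⟩ := hstarprime.dvd_of_dvd_pow hsγn
    -- γ * γ = p * u
    have hsq : γ * γ = ((q : ℤ) : GaussianInt) * u := by
      calc γ * γ = (γ * star γ) * u := by rw [mul_assoc, ← hu]
      _ = ((q : ℤ) : GaussianInt) * u := by rw [← Zsqrtd.norm_eq_mul_conj, hnorm]
    -- norm u = 1
    have hnu : u.re * u.re + u.im * u.im = 1 := by
      have h2 : Zsqrtd.norm (γ * γ) = (q : ℤ) * (q : ℤ) * Zsqrtd.norm u := by
        rw [hsq, Zsqrtd.norm_mul]
        have : Zsqrtd.norm ((q : ℤ) : GaussianInt) = (q : ℤ) * (q : ℤ) := by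
          simp [Zsqrtd.norm_def]
        rw [this]
      rw [Zsqrtd.norm_mul, hnorm] at h2
      have hq0 : (0 : ℤ) < q := by exact_mod_cast hq.pos
      have : Zsqrtd.norm u = 1 := by
        have := mul_left_cancel₀ (by positivity : ((q:ℤ) * q) ≠ 0) (by linarith [h2] : (q:ℤ) * q * 1 = (q:ℤ) * q * Zsqrtd.norm u)
        omega
      simp [Zsqrtd.norm_def] at this; linarith
      
    -- component equations
    set a := γ.re with ha
    set b := γ.im with hb
    have hab : a * a + b * b = (q : ℤ) := by
      have := hnorm; simp [Zsqrtd.norm_def, ← ha, ← hb] at this; linarith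
    have e1 : a * a - b * b = (q : ℤ) * u.re := by
      have := congrArg Zsqrtd.re hsq
      simpa [Zsqrtd.re_mul, Zsqrtd.im_mul, ← ha, ← hb, sub_eq_add_neg] using this
    have e2 : a * b + b * a = (q : ℤ) * u.im := by
      have := congrArg Zsqrtd.im hsq
      simpa [Zsqrtd.re_mul, Zsqrtd.im_mul, ← ha, ← hb] using this
    have hq0 : (0 : ℤ) < q := by exact_mod_cast hq.pos
    -- case on the unit
    have hcase : u.re = 0 ∨ u.im = 0 := by
      by_contra hcon
      push_neg at hcon
      have h1' : 1 ≤ u.re * u.re := by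
        have := mul_self_pos.mpr hcon.1; omega
      have h2' : 1 ≤ u.im * u.im := by
        have := mul_self_pos.mpr hcon.2; omega
      omega
    rcases hcase with h | h
    · -- a² = b², so q = 2a², so 2 ∣ q, contradiction with q % 4 = 1
      rw [h, mul_zero, sub_eq_zero] at e1
      have : (2 : ℤ) ∣ (q : ℤ) := ⟨a * a, by linarith⟩
      have : (2 : ℕ) ∣ q := by exact_mod_cast this
      omega
    · -- 2ab = 0, so a = 0 or b = 0, so q is a perfect square
      rw [h, mul_zero] at e2
      have hab0 : a = 0 ∨ b = 0 := by
        rcases mul_eq_zero.mp (by linarith : a * b = 0) with h' | h'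
        · left; exact h'
        · right; exact h'
      have hsqr : ∃ m : ℤ, m * m = (q : ℤ) := by
        rcases hab0 with h' | h'
        · exact ⟨b, by rw [h'] at hab; linarith⟩
        · exact ⟨a, by rw [h'] at hab; linarith⟩
      obtain ⟨m, hm⟩ := hsqr
      have hm' : m.natAbs * m.natAbs = q := by
        have h2 : ((m.natAbs : ℤ)) * (m.natAbs : ℤ) = (q : ℤ) := by
          rw [Int.natAbs_mul_self']; exact hm
        exact_mod_cast h2
      rcases hq.eq_one_or_self_of_dvd m.natAbs ⟨m.natAbs, hm'.symm⟩ with h' | h'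
      · rw [h'] at hm'; simp at hm'; exact hq.one_lt.ne' hm'.symm
      · rw [h'] at hm'
        nlinarith [hq.one_lt]
  refine ⟨hg, ?_⟩
  simp [denomHeight, hg, hnpow n, hnorm]
end

section
/- Let α ∈ ℤ[i] be a Gaussian prime with N(α) a rational prime ≡ 1 (mod 4), and let γ be an associate of the conjugate of α. Then for all m, n ∈ ℕ, H(αⁿ γ^m) = H(α)^{max{m,n}}. -/
section Aux

lemma content_dvd_of_dvd {β δ : GaussianInt} (h : β ∣ δ) :
    Int.gcd β.re β.im ∣ Int.gcd δ.re δ.im := by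
  have h1 : ((Int.gcd β.re β.im : ℤ) : GaussianInt) ∣ δ :=
    dvd_trans ((Zsqrtd.intCast_dvd _ _).mpr ⟨Int.gcd_dvd_left _ _, Int.gcd_dvd_right _ _⟩) h
  rw [Zsqrtd.intCast_dvd] at h1
  exact Int.natCast_dvd_natCast.mp (Int.dvd_coe_gcd h1.1 h1.2)

lemma content_eq_of_associated {β δ : GaussianInt} (h : Associated β δ) :
    Int.gcd β.re β.im = Int.gcd δ.re δ.im :=
  Nat.dvd_antisymm (content_dvd_of_dvd h.dvd) (content_dvd_of_dvd h.symm.dvd)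

lemma norm_eq_of_associated {β δ : GaussianInt} (h : Associated β δ) :
    β.norm = δ.norm := by
  obtain ⟨u, hu⟩ := h
  have hu1 : Zsqrtd.norm (u : GaussianInt) = 1 :=
    (Zsqrtd.norm_eq_one_iff' (by norm_num) _).mpr u.isUnit
  rw [← hu, Zsqrtd.norm_mul, hu1, mul_one]

lemma denomHeight_eq_of_associated {β δ : GaussianInt} (h : Associated β δ) :
    denomHeight β = denomHeight δ := by
  unfold denomHeight
  rw [norm_eq_of_associated h, content_eq_of_associated h]

lemma gaussian_norm_pow (α : GaussianInt) (k : ℕ) :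
    Zsqrtd.norm (α ^ k) = (Zsqrtd.norm α) ^ k := by
  rw [show Zsqrtd.norm (α ^ k) = Zsqrtd.normMonoidHom (α ^ k) from rfl, map_pow]
  rfl

lemma content_pow_eq_one (α : GaussianInt) (p : ℕ) (hp : Nat.Prime p)
    (h1 : p % 4 = 1) (hnorm : Zsqrtd.norm α = (p : ℤ)) (k : ℕ) :
    Int.gcd ((α ^ k).re) ((α ^ k).im) = 1 := by
  haveI : Fact p.Prime := ⟨hp⟩
  have hp2 : p ≠ 2 := by omega
  have hnormval : α.re * α.re + α.im * α.im = (p : ℤ) := by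
    have := hnorm
    simp only [Zsqrtd.norm_def] at this
    linarith
  -- p does not divide α.re nor α.im
  have hpre : ¬ ((p : ℤ) ∣ α.re) := by
    intro h
    have him : (p : ℤ) ∣ α.im := by
      have h2 : (p : ℤ) ∣ α.im * α.im := by
        have : α.im * α.im = (p:ℤ) - α.re * α.re := by linarith
        rw [this]; exact dvd_sub (dvd_refl _) (h.mul_right _)
      exact (Int.Prime.dvd_mul' hp h2).elim id id
    have hsq : (p : ℤ) * p ∣ (p : ℤ) := by
      have : (p : ℤ) * p ∣ α.re * α.re + α.im * α.im :=
        dvd_add (mul_dvd_mul h h) (mul_dvd_mul him him)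
      rwa [hnormval] at this
    have := Int.le_of_dvd (by exact_mod_cast hp.pos) hsq
    nlinarith [hp.two_le, (by exact_mod_cast hp.two_le : (2:ℤ) ≤ p)]
  have hpim : ¬ ((p : ℤ) ∣ α.im) := by
    intro h
    have hre : (p : ℤ) ∣ α.re := by
      have h2 : (p : ℤ) ∣ α.re * α.re := by
        have : α.re * α.re = (p:ℤ) - α.im * α.im := by linarith
        rw [this]; exact dvd_sub (dvd_refl _) (h.mul_right _)
      exact (Int.Prime.dvd_mul' hp h2).elim id id
    exact hpre hre
  -- get a square root of -1 such that the induced map sends α to a nonzero element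
  obtain ⟨r0, hr0⟩ : IsSquare (-1 : ZMod p) :=
    (ZMod.exists_sq_eq_neg_one_iff).mpr (by omega)
  have hr0' : r0 * r0 = (-1 : ZMod p) := hr0.symm
  have ha : (α.re : ZMod p) ≠ 0 := by
    rw [Ne, ZMod.intCast_zmod_eq_zero_iff_dvd]; exact hpre
  have hb : (α.im : ZMod p) ≠ 0 := by
    rw [Ne, ZMod.intCast_zmod_eq_zero_iff_dvd]; exact hpim
  have hr0ne : r0 ≠ 0 := by
    intro h; rw [h, mul_zero] at hr0'
    exact (neg_ne_zero.mpr (one_ne_zero)) hr0'.symm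
  have h2ne : (2 : ZMod p) ≠ 0 := by
    intro h
    have : ((2:ℕ) : ZMod p) = 0 := by exact_mod_cast h
    rw [ZMod.natCast_eq_zero_iff] at this
    exact hp2 ((Nat.prime_dvd_prime_iff_eq hp Nat.prime_two).mp this)
  have key : ∃ s : ZMod p, s * s = -1 ∧ (α.re : ZMod p) + α.im * s ≠ 0 := by
    by_cases hc : (α.re : ZMod p) + α.im * r0 = 0
    · refine ⟨-r0, by rw [neg_mul_neg]; exact hr0', ?_⟩
      intro hc2
      have : (2 : ZMod p) * (α.re : ZMod p) = 0 := by
        have := congrArg₂ (· + ·) hc hc2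
        simp only [add_zero] at this
        ring_nf at this ⊢
        linear_combination this
      rcases mul_eq_zero.mp this with h | h
      · exact h2ne h
      · exact ha h
    · exact ⟨r0, hr0', hc⟩
  obtain ⟨s, hs, hψα⟩ := key
  have hs' : s * s = ((-1 : ℤ) : ZMod p) := by push_cast; exact hs
  set ψ : GaussianInt →+* ZMod p := Zsqrtd.lift ⟨s, hs'⟩ with hψ
  have hψval : ∀ x : GaussianInt, ψ x = (x.re : ZMod p) + x.im * s := fun x => rfl
  have hψk : ψ (α ^ k) ≠ 0 := by
    rw [map_pow]
    exact pow_ne_zero _ (by rw [hψval]; exact hψα)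
  rw [Nat.eq_one_iff_not_exists_prime_dvd]
  intro q hq hqg
  have hqdvd : ((q : ℤ) : GaussianInt) ∣ α ^ k := by
    rw [Zsqrtd.intCast_dvd]
    constructor
    · exact dvd_trans (Int.natCast_dvd_natCast.mpr hqg) (Int.gcd_dvd_left _ _)
    · exact dvd_trans (Int.natCast_dvd_natCast.mpr hqg) (Int.gcd_dvd_right _ _)
  have hnormpow : Zsqrtd.norm (α ^ k) = (p : ℤ) ^ k := by
    rw [gaussian_norm_pow, hnorm]
  have hq2 : (q : ℤ) * q ∣ (p : ℤ) ^ k := by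
    obtain ⟨c, hc⟩ := hqdvd
    have := congrArg Zsqrtd.norm hc
    rw [hnormpow, Zsqrtd.norm_mul, Zsqrtd.norm_intCast] at this
    exact ⟨c.norm, this⟩
  have hqp : q = p := by
    have hqpk : (q : ℤ) ∣ (p : ℤ) ^ k := dvd_trans (dvd_mul_right _ _) hq2
    have : q ∣ p ^ k := by exact_mod_cast hqpk
    exact (Nat.prime_dvd_prime_iff_eq hq hp).mp (hq.dvd_of_dvd_pow this)
  subst hqp
  have hre0 : (((α ^ k).re : ZMod q)) = 0 := by
    rw [ZMod.intCast_zmod_eq_zero_iff_dvd]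
    exact ((Zsqrtd.intCast_dvd _ _).mp hqdvd).1
  have him0 : (((α ^ k).im : ZMod q)) = 0 := by
    rw [ZMod.intCast_zmod_eq_zero_iff_dvd]
    exact ((Zsqrtd.intCast_dvd _ _).mp hqdvd).2
  apply hψk
  rw [hψval, hre0, him0, zero_mul, add_zero]

lemma denomHeight_intCast_mul (c : ℤ) (hc : 0 < c) (δ : GaussianInt)
    (h1 : Int.gcd δ.re δ.im = 1) :
    denomHeight ((c : GaussianInt) * δ) = c * δ.norm := by
  unfold denomHeight
  have hre : ((c : GaussianInt) * δ).re = c * δ.re := Zsqrtd.re_smul c δ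
  have him : ((c : GaussianInt) * δ).im = c * δ.im := Zsqrtd.im_smul c δ
  rw [Zsqrtd.norm_mul, Zsqrtd.norm_intCast, hre, him, Int.gcd_mul_left, h1, mul_one,
    Int.natAbs_of_nonneg hc.le, mul_assoc, Int.mul_ediv_cancel_left _ hc.ne']

end Aux

/-- Let `α ∈ ℤ[i]` be a Gaussian prime with `N(α)` a rational prime `≡ 1 (mod 4)`, and
let `γ` be an associate of the conjugate of `α`. Then for all `m, n ≥ 1`,
`H(αⁿ γᵐ) = H(α)^{max{m,n}}`. -/
theorem stmt_14 (α γ : GaussianInt) (hα : Irreducible α) (p : ℕ) (hp : Nat.Prime p)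
    (h1 : p % 4 = 1) (hnorm : Zsqrtd.norm α = (p : ℤ))
    (hγ : Associated γ (⟨α.re, -α.im⟩ : GaussianInt)) :
    ∀ m n : ℕ, 0 < m → 0 < n →
      denomHeight (α ^ n * γ ^ m) = denomHeight α ^ (max m n) := by
  intro m n hm hn
  set β : GaussianInt := (⟨α.re, -α.im⟩ : GaussianInt) with hβ
  have hβnorm : Zsqrtd.norm β = (p : ℤ) := by
    rw [← hnorm]
    simp only [Zsqrtd.norm_def, hβ]
    ring
  have hppos : (0 : ℤ) < (p : ℤ) := by exact_mod_cast hp.pos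
  have hmul : α * β = (((p : ℕ) : ℤ) : GaussianInt) := by
    have h := hnorm
    rw [Zsqrtd.norm_def] at h
    rw [Zsqrtd.ext_iff, Zsqrtd.re_mul, Zsqrtd.im_mul, Zsqrtd.re_intCast, Zsqrtd.im_intCast]
    constructor
    · show α.re * α.re + -1 * α.im * (-α.im) = ((p:ℕ):ℤ)
      linarith
    · show α.re * (-α.im) + α.im * α.re = 0
      ring
  have hcontα := content_pow_eq_one α p hp h1 hnorm
  have hcontβ := content_pow_eq_one β p hp h1 hβnorm
  have hHα : denomHeight α = (p : ℤ) := by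
    have hc := hcontα 1
    rw [pow_one] at hc
    unfold denomHeight
    rw [hnorm, hc]
    simp
  have hassoc : Associated (α ^ n * γ ^ m) (α ^ n * β ^ m) :=
    Associated.mul_left _ (hγ.pow_pow)
  rw [denomHeight_eq_of_associated hassoc, hHα]
  rcases le_total m n with h | h
  · -- m ≤ n
    have hpow : α ^ n * β ^ m = ((((p : ℤ) ^ m) : ℤ) : GaussianInt) * α ^ (n - m) := by
      have hsplit : α ^ n = α ^ m * α ^ (n - m) := by
        rw [← pow_add]; congr 1; omega
      rw [hsplit, mul_comm (α ^ m) (α ^ (n - m)), mul_assoc, ← mul_pow, hmul]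
      push_cast
      ring
    rw [hpow, denomHeight_intCast_mul _ (pow_pos hppos m) _ (hcontα (n - m)),
      gaussian_norm_pow, hnorm, ← pow_add, max_eq_right h]
    congr 1
    omega
  · -- n ≤ m
    have hpow : α ^ n * β ^ m = ((((p : ℤ) ^ n) : ℤ) : GaussianInt) * β ^ (m - n) := by
      have hsplit : β ^ m = β ^ n * β ^ (m - n) := by
        rw [← pow_add]; congr 1; omega
      rw [hsplit, ← mul_assoc, ← mul_pow, hmul]
      push_cast
      ring
    rw [hpow, denomHeight_intCast_mul _ (pow_pos hppos n) _ (hcontβ (m - n)),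
      gaussian_norm_pow, hβnorm, ← pow_add, max_eq_left h]
    congr 1
    omega
end

section
/- Let α ∈ ℤ[i] and let γ ∈ ℤ[i] be a Gaussian prime with γ ∤ α. Set d = ord(α; γ) and m = ν_γ(α^d − 1). Then ord(α; γ^k) = d for all 1 ≤ k ≤ m. -/
/-- The multiplicative order of `α` modulo `γ` in `ℤ[i]`: the least positive `k` with
`α^k ≡ 1 (mod γ)`. -/
noncomputable def gOrd (α γ : GaussianInt) : ℕ := sInf {k : ℕ | 0 < k ∧ γ ∣ α ^ k - 1}

/-- Let `γ` be a Gaussian prime with `γ ∤ α`, `d = ord(α; γ)` and `m = ν_γ(α^d − 1)`.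
Then `ord(α; γ^k) = d` for all `1 ≤ k ≤ m`. -/
theorem stmt_15 (α γ : GaussianInt) (hγ : Irreducible γ) (hnd : ¬ γ ∣ α)
    (d m : ℕ) (hd : d = gOrd α γ)
    (hm : γ ^ m ∣ α ^ d - 1 ∧ ¬ γ ^ (m + 1) ∣ α ^ d - 1) :
    ∀ k : ℕ, 1 ≤ k → k ≤ m → gOrd α (γ ^ k) = d := by
  intro k hk1 hkm
  -- d is positive
  have hdpos : 0 < d := by
    rcases Nat.eq_zero_or_pos d with h0 | h
    · exfalso
      apply hm.2
      simp [h0]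
    · exact h
  -- the base set is nonempty, so d belongs to it and is minimal
  have hSne : {n : ℕ | 0 < n ∧ γ ∣ α ^ n - 1}.Nonempty := by
    by_contra h
    rw [Set.not_nonempty_iff_eq_empty] at h
    rw [hd] at hdpos
    simp [gOrd, h] at hdpos
  have hdmem : 0 < d ∧ γ ∣ α ^ d - 1 := by
    rw [hd]; exact Nat.sInf_mem hSne
  have hdmin : ∀ n, 0 < n → γ ∣ α ^ n - 1 → d ≤ n := by
    intro n hn hdvd
    rw [hd]
    exact Nat.sInf_le ⟨hn, hdvd⟩
  -- d belongs to the set for γ^k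
  have hdmemk : d ∈ {n : ℕ | 0 < n ∧ γ ^ k ∣ α ^ n - 1} :=
    ⟨hdpos, dvd_trans (pow_dvd_pow γ hkm) hm.1⟩
  refine le_antisymm (Nat.sInf_le hdmemk) ?_
  apply le_csInf ⟨d, hdmemk⟩
  intro n hn
  exact hdmin n hn.1 (dvd_trans (dvd_pow_self γ (Nat.one_le_iff_ne_zero.mp hk1)) hn.2)
end

section
/- Let α ∈ ℤ[i] and let γ ∈ ℤ[i] be a Gaussian prime with γ ∤ α that is either an associate of a rational prime ≡ 3 (mod 4) or has norm a rational prime ≡ 1 (mod 4). Set d = ord(α; γ), m = ν_γ(α^d − 1), and p = H(γ). Then for every j ∈ ℕ, ord(α; γ^{m+j}) = p^j · d and ν_γ(α^{p^j d} − 1) = m + j. -/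
namespace Stmt16Aux

open Finset

abbrev R := GaussianInt

/-- A prime is not a perfect square. -/
lemma not_sq {q : ℕ} (hq : q.Prime) (g : ℕ) : g * g ≠ q := by
  intro h
  rcases hq.eq_one_or_self_of_dvd g ⟨g, h.symm⟩ with h1 | h1
  · subst h1; have := hq.one_lt; omega
  · subst h1; nlinarith [hq.one_lt]

lemma int_not_sq {q : ℕ} (hq : q.Prime) (a : ℤ) : a * a ≠ (q : ℤ) := by
  intro h
  apply not_sq hq a.natAbs
  have h2 : ((a.natAbs * a.natAbs : ℕ) : ℤ) = ((q : ℕ) : ℤ) := by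
    rw [Nat.cast_mul, Int.natAbs_mul_self']
    exact h
  exact_mod_cast h2

/-- binomial approximation: `x² ∣ (1+x)^i - 1 - i·x`. -/
lemma bin (x : R) : ∀ i : ℕ, x ^ 2 ∣ (1 + x) ^ i - 1 - (i : R) * x := by
  intro i
  induction i with
  | zero => simp
  | succ i ih =>
    have key : (1 + x) ^ (i + 1) - 1 - ((i + 1 : ℕ) : R) * x
        = (1 + x) * ((1 + x) ^ i - 1 - (i : R) * x) + (i : R) * x ^ 2 := by
      push_cast; ring
    rw [key]
    exact dvd_add (dvd_mul_of_dvd_right ih _) (dvd_mul_left _ _)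

/-- geometric sum factorization -/
lemma geom (β : R) (t : ℕ) : β ^ t - 1 = (β - 1) * ∑ i ∈ range t, β ^ i := by
  rw [mul_comm, geom_sum_mul]

/-- If `p ∤ t` and `p ∣ norm γ` then `γ ∤ t` in `ℤ[i]`. -/
lemma gamma_not_dvd_nat {γ : R} {p : ℕ} (hpp : p.Prime)
    (hpnorm : (p : ℤ) ∣ γ.norm) (t : ℕ) (ht : ¬ p ∣ t) : ¬ γ ∣ (t : R) := by
  rintro ⟨c, hc⟩
  have hn : (t : ℤ) * t = γ.norm * c.norm := by
    have := congrArg Zsqrtd.norm hc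
    rwa [Zsqrtd.norm_mul, Zsqrtd.norm_natCast] at this
  have : (p : ℤ) ∣ (t : ℤ) * t := hn ▸ Dvd.dvd.mul_right hpnorm _
  have : p ∣ t * t := by exact_mod_cast this
  have htt : p ∣ t ^ 2 := by rwa [sq]
  exact ht (hpp.prime.dvd_of_dvd_pow htt)

/-- `γ ∣ (sum of β^i, i < t) - t` when `γ ∣ β - 1`. -/
lemma sum_sub_card {γ β : R} (h : γ ∣ β - 1) (t : ℕ) :
    γ ∣ (∑ i ∈ range t, β ^ i) - (t : R) := by
  have : (∑ i ∈ range t, β ^ i) - (t : R) = ∑ i ∈ range t, (β ^ i - 1) := by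
    rw [Finset.sum_sub_distrib]
    simp
  rw [this]
  refine Finset.dvd_sum fun i _ => h.trans ?_
  simpa using sub_dvd_pow_sub_pow β 1 i

/-- Exact valuation preserved by prime-to-p powers. -/
lemma same_val {γ : R} (hprime : Prime γ) {p : ℕ} (hpp : p.Prime)
    (hpnorm : (p : ℤ) ∣ γ.norm) (β : R) (k t : ℕ) (hk : 1 ≤ k)
    (h1 : γ ^ k ∣ β - 1) (h2 : ¬ γ ^ (k + 1) ∣ β - 1)
    (ht : ¬ p ∣ t) :
    γ ^ k ∣ β ^ t - 1 ∧ ¬ γ ^ (k + 1) ∣ β ^ t - 1 := by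
  have hγ1 : γ ∣ β - 1 := (dvd_pow_self γ (by omega : k ≠ 0)).trans h1
  have hS : ¬ γ ∣ ∑ i ∈ range t, β ^ i := by
    intro hd
    have h3 := dvd_sub hd (sum_sub_card hγ1 t)
    rw [sub_sub_cancel] at h3
    exact gamma_not_dvd_nat hpp hpnorm t ht h3
  rw [geom]
  constructor
  · exact dvd_mul_of_dvd_left h1 _
  · intro hd
    exact h2 (hprime.pow_dvd_of_dvd_mul_right _ hS hd)

/-- The key LTE step: one power of `p` raises the valuation by exactly one. -/
lemma step_val {γ : R} (hprime : Prime γ) {p : ℕ} (hpp : p.Prime) (hodd : p % 2 = 1)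
    (hγp : γ ∣ (p : R)) (hγp2 : ¬ γ * γ ∣ (p : R))
    (β : R) (k : ℕ) (hk : 1 ≤ k)
    (h1 : γ ^ k ∣ β - 1) (h2 : ¬ γ ^ (k + 1) ∣ β - 1) :
    γ ^ (k + 1) ∣ β ^ p - 1 ∧ ¬ γ ^ (k + 2) ∣ β ^ p - 1 := by
  set x := β - 1 with hx
  have hβ : β = 1 + x := by rw [hx]; ring
  have hγx : γ ∣ x := (dvd_pow_self γ (by omega : k ≠ 0)).trans h1
  set S := ∑ i ∈ range p, β ^ i with hSdef
  -- sum of i over range p equals p * c with 2c+1 = p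
  obtain ⟨c, hc⟩ : ∃ c, p = 2 * c + 1 := ⟨p / 2, by omega⟩
  have hsum : ∑ i ∈ range p, i = p * c := by
    have h2s : (∑ i ∈ range p, i) * 2 = p * (p - 1) := Finset.sum_range_id_mul_two p
    have he : p - 1 = 2 * c := by omega
    rw [he] at h2s
    have : (∑ i ∈ range p, i) * 2 = (p * c) * 2 := by rw [h2s]; ring
    exact Nat.eq_of_mul_eq_mul_right (by norm_num) this
  -- γ² ∣ S - p
  have hSp : γ * γ ∣ S - (p : R) := by
    have e1 : ∑ _i ∈ range p, (1 : R) = (p : R) := by simp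
    have e2 : ∑ i ∈ range p, (i : R) * x = ((p * c : ℕ) : R) * x := by
      rw [← Finset.sum_mul, ← Nat.cast_sum, hsum]
    have key : S - (p : R) =
        (∑ i ∈ range p, (β ^ i - 1 - (i : R) * x)) + ((p * c : ℕ) : R) * x := by
      rw [Finset.sum_sub_distrib, Finset.sum_sub_distrib, e1, e2, hSdef]
      ring
    rw [key]
    refine dvd_add (Finset.dvd_sum fun i _ => ?_) ?_
    · have hb := bin x i
      rw [← hβ] at hb
      exact (mul_dvd_mul hγx hγx).trans (by simpa [sq] using hb)
    · push_cast
      exact mul_dvd_mul (hγp.trans (Dvd.intro c rfl)) hγx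
  have hγS : γ ∣ S := by
    have := dvd_add ((dvd_mul_right γ γ).trans hSp) hγp
    simpa using this
  have hγ2S : ¬ γ * γ ∣ S := by
    intro hdd
    apply hγp2
    have := dvd_sub hdd hSp
    simpa using this
  -- now β ^ p - 1 = x * S
  have hfac : β ^ p - 1 = x * S := geom β p
  obtain ⟨u, hu⟩ : ∃ u, x = γ ^ k * u := h1
  have h1' : γ ^ k ∣ x := ⟨u, hu⟩
  have hγu : ¬ γ ∣ u := by
    rintro ⟨w, hw⟩
    exact h2 ⟨w, by rw [hu, hw, pow_succ]; ring⟩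
  constructor
  · rw [hfac, pow_succ]
    exact mul_dvd_mul h1' hγS
  · intro hdd
    rw [hfac, hu] at hdd
    have hne : (γ : R) ^ k ≠ 0 := pow_ne_zero _ hprime.ne_zero
    have h4 : γ ^ (k + 2) = γ ^ k * (γ * γ) := by ring
    rw [h4, mul_assoc] at hdd
    have h5 : γ * γ ∣ u * S := (mul_dvd_mul_iff_left hne).mp hdd
    have h6 : (γ * γ) ∣ S := by
      have : γ ^ 2 ∣ S := hprime.pow_dvd_of_dvd_mul_left 2 hγu (by rwa [← sq] at h5)
      rwa [sq] at this
    exact hγ2S h6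

/-- Iterated LTE step. -/
lemma iter_val {γ : R} (hprime : Prime γ) {p : ℕ} (hpp : p.Prime) (hodd : p % 2 = 1)
    (hγp : γ ∣ (p : R)) (hγp2 : ¬ γ * γ ∣ (p : R))
    (β : R) (m : ℕ) (hm1 : 1 ≤ m)
    (h1 : γ ^ m ∣ β - 1) (h2 : ¬ γ ^ (m + 1) ∣ β - 1) :
    ∀ j : ℕ, γ ^ (m + j) ∣ β ^ p ^ j - 1 ∧ ¬ γ ^ (m + j + 1) ∣ β ^ p ^ j - 1 := by
  intro j
  induction j with
  | zero => simpa using ⟨h1, h2⟩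
  | succ j ih =>
    have hstep := step_val hprime hpp hodd hγp hγp2 (β ^ p ^ j) (m + j) (by omega) ih.1 ih.2
    have h3 : β ^ p ^ (j + 1) = (β ^ p ^ j) ^ p := by rw [pow_succ, pow_mul]
    have h4 : m + (j + 1) = m + j + 1 := by omega
    have h5 : m + (j + 1) + 1 = m + j + 2 := by omega
    rw [h3, h5, h4]
    exact hstep

/-- There is a positive period of `α` mod `γ`. -/
lemma exists_period {α γ : R} (hprime : Prime γ) (hnd : ¬ γ ∣ α) {p : ℕ} (hpp : p.Prime)
    (hγp : γ ∣ (p : R)) : ∃ k, 0 < k ∧ γ ∣ α ^ k - 1 := by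
  haveI : Fact (Nat.Prime p) := ⟨hpp⟩
  let f : ℕ → ZMod p × ZMod p := fun n => (((α ^ n).re : ZMod p), ((α ^ n).im : ZMod p))
  obtain ⟨a, b, hab, hfab⟩ := Finite.exists_ne_map_eq_of_infinite f
  wlog hlt : a < b generalizing a b
  · exact this b a hab.symm hfab.symm (by omega)
  have h1 : (((α ^ a).re : ZMod p)) = (((α ^ b).re : ZMod p)) := congrArg Prod.fst hfab
  have h2 : (((α ^ a).im : ZMod p)) = (((α ^ b).im : ZMod p)) := congrArg Prod.snd hfab
  have d1 : (p : ℤ) ∣ (α ^ b).re - (α ^ a).re := ((ZMod.intCast_eq_intCast_iff _ _ _).mp h1).dvd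
  have d2 : (p : ℤ) ∣ (α ^ b).im - (α ^ a).im := ((ZMod.intCast_eq_intCast_iff _ _ _).mp h2).dvd
  have hdvd : ((p : ℤ) : R) ∣ α ^ b - α ^ a := by
    rw [Zsqrtd.intCast_dvd]
    constructor
    · simpa using d1
    · simpa using d2
  have hγdvd : γ ∣ α ^ b - α ^ a := by
    refine Dvd.dvd.trans ?_ hdvd
    have : ((p : ℤ) : R) = ((p : ℕ) : R) := by push_cast; ring
    rw [this]
    exact hγp
  have heq : α ^ b - α ^ a = α ^ a * (α ^ (b - a) - 1) := by
    rw [mul_sub, mul_one, ← pow_add]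
    have : a + (b - a) = b := by omega
    rw [this]
  rw [heq] at hγdvd
  rcases hprime.dvd_or_dvd hγdvd with h | h
  · exact absurd (hprime.dvd_of_dvd_pow h) hnd
  · exact ⟨b - a, by omega, h⟩

/-- Basic properties of `gOrd` at a prime modulus. -/
lemma gOrd_spec {α γ : R} (hprime : Prime γ) (hnd : ¬ γ ∣ α)
    (hne : ∃ k, 0 < k ∧ γ ∣ α ^ k - 1) :
    0 < gOrd α γ ∧ γ ∣ α ^ gOrd α γ - 1 ∧ ∀ k, 0 < k → γ ∣ α ^ k - 1 → gOrd α γ ∣ k := by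
  have hmem : gOrd α γ ∈ {k : ℕ | 0 < k ∧ γ ∣ α ^ k - 1} := Nat.sInf_mem hne
  obtain ⟨hpos, hdvd⟩ := hmem
  refine ⟨hpos, hdvd, fun k hk hkd => ?_⟩
  set d := gOrd α γ with hddef
  have hkeq : d * (k / d) + k % d = k := Nat.div_add_mod k d
  have hr : γ ∣ α ^ (k % d) - 1 := by
    have h1 : γ ∣ (α ^ d) ^ (k / d) - 1 :=
      hdvd.trans (by simpa using sub_dvd_pow_sub_pow (α ^ d) 1 (k / d))
    have h2 : α ^ k - α ^ (k % d) = α ^ (k % d) * ((α ^ d) ^ (k / d) - 1) := by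
      rw [mul_sub, mul_one, ← pow_mul, ← pow_add]
      have : k % d + d * (k / d) = k := by omega
      rw [this]
    have h3 : γ ∣ α ^ k - α ^ (k % d) := h2 ▸ Dvd.dvd.mul_left h1 _
    have h4 : α ^ (k % d) - 1 = (α ^ k - 1) - (α ^ k - α ^ (k % d)) := by ring
    rw [h4]
    exact dvd_sub hkd h3
  by_contra hnd2
  have hrpos : 0 < k % d := by
    rcases Nat.eq_zero_or_pos (k % d) with h | h
    · exact absurd (Nat.dvd_of_mod_eq_zero h) hnd2
    · exact h
  have hle : d ≤ k % d :=
    Nat.sInf_le (show k % d ∈ {k : ℕ | 0 < k ∧ γ ∣ α ^ k - 1} from ⟨hrpos, hr⟩)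
  have hlt : k % d < d := Nat.mod_lt _ hpos
  omega

/-- Derived arithmetic facts about `γ` and `p`. -/
lemma facts {γ : R} (hγ : Irreducible γ) {p : ℕ}
    (htype : (∃ q : ℕ, Nat.Prime q ∧ q % 4 = 3 ∧ Associated γ (q : GaussianInt)) ∨
      (∃ q : ℕ, Nat.Prime q ∧ q % 4 = 1 ∧ Zsqrtd.norm γ = (q : ℤ)))
    (hp : (p : ℤ) = denomHeight γ) :
    p.Prime ∧ p % 2 = 1 ∧ γ ∣ (p : R) ∧ ¬ γ * γ ∣ (p : R) ∧ (p : ℤ) ∣ Zsqrtd.norm γ := by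
  rw [denomHeight] at hp
  rcases htype with ⟨q, hq, hq4, ⟨u, hu⟩⟩ | ⟨q, hq, hq4, hnorm⟩
  · -- inert case
    have hγ_eq : γ = (q : R) * (↑u⁻¹ : R) := by
      have h0 := congrArg (· * (↑u⁻¹ : R)) hu
      simpa [mul_assoc] using h0
    set w : R := (↑u⁻¹ : R) with hwdef
    have hwu : IsUnit w := Units.isUnit _
    have hwn : w.norm = 1 := by
      have h1 := Zsqrtd.norm_eq_one_iff.mpr hwu
      have h2 := Zsqrtd.norm_nonneg (by norm_num : (-1 : ℤ) ≤ 0) w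
      omega
    have hre : γ.re = (q : ℤ) * w.re := by rw [hγ_eq]; simp [Zsqrtd.re_mul]
    have him : γ.im = (q : ℤ) * w.im := by rw [hγ_eq]; simp [Zsqrtd.im_mul]
    have hnormdef : w.re * w.re + w.im * w.im = 1 := by
      have h3 := hwn
      rw [Zsqrtd.norm_def] at h3
      linarith
    have hwgcd : Int.gcd w.re w.im = 1 := by
      have hg : (Int.gcd w.re w.im : ℤ) ∣ 1 := by
        have hgg : (Int.gcd w.re w.im : ℤ) ∣ w.re * w.re + w.im * w.im :=
          dvd_add ((Int.gcd_dvd_left _ _).mul_right _) ((Int.gcd_dvd_right _ _).mul_right _)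
        rwa [hnormdef] at hgg
      have : (Int.gcd w.re w.im : ℕ) ∣ 1 := by exact_mod_cast hg
      exact Nat.dvd_one.mp this
    have hγn : γ.norm = (q : ℤ) * q := by
      rw [hγ_eq, Zsqrtd.norm_mul, Zsqrtd.norm_natCast, hwn, mul_one]
    have hγgcd : (Int.gcd γ.re γ.im : ℤ) = (q : ℤ) := by
      rw [hre, him, Int.gcd_mul_left, hwgcd]
      simp
    have hq0 : (q : ℤ) ≠ 0 := by exact_mod_cast hq.pos.ne'
    have hpq : p = q := by
      rw [hγn, hγgcd, Int.mul_ediv_cancel_left _ hq0] at hp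
      exact_mod_cast hp
    subst hpq
    refine ⟨hq, by omega, ⟨↑u, hu.symm⟩, ?_, by rw [hγn]; exact Dvd.intro _ rfl⟩
    rintro ⟨c, hc⟩
    have hc2 : γ * ↑u = γ * (γ * c) := by rw [hu, hc]; ring
    have hc3 : (↑u : R) = γ * c := mul_left_cancel₀ hγ.ne_zero hc2
    exact hγ.not_isUnit (isUnit_of_dvd_unit ⟨c, hc3⟩ u.isUnit)
  · -- split case
    have hq0 : (q : ℤ) ≠ 0 := by exact_mod_cast hq.pos.ne'
    have hnd2 : γ.re * γ.re + γ.im * γ.im = (q : ℤ) := by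
      have h3 := hnorm
      rw [Zsqrtd.norm_def] at h3
      linarith
    have hγgcd : Int.gcd γ.re γ.im = 1 := by
      set g := Int.gcd γ.re γ.im with hgdef
      have hg2 : ((g * g : ℕ) : ℤ) ∣ (q : ℤ) := by
        rw [← hnd2]
        push_cast
        exact dvd_add (mul_dvd_mul (Int.gcd_dvd_left _ _) (Int.gcd_dvd_left _ _))
          (mul_dvd_mul (Int.gcd_dvd_right _ _) (Int.gcd_dvd_right _ _))
      have hg3 : g * g ∣ q := by exact_mod_cast hg2
      rcases hq.eq_one_or_self_of_dvd _ hg3 with h | h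
      · have : g = 1 := by nlinarith
        exact this
      · exact absurd h (not_sq hq g)
    have hpq : p = q := by
      rw [hnorm, hγgcd] at hp
      simp at hp
      exact_mod_cast hp
    subst hpq
    have hconj : ((p : ℕ) : R) = γ * star γ := by
      have h5 := Zsqrtd.norm_eq_mul_conj γ
      rw [hnorm] at h5
      exact_mod_cast h5
    refine ⟨hq, by omega, ⟨star γ, hconj⟩, ?_, by rw [hnorm]⟩
    rintro ⟨c, hc⟩
    have hc2 : γ * star γ = γ * (γ * c) := by rw [← hconj, hc]; ring
    have hc3 : star γ = γ * c := mul_left_cancel₀ hγ.ne_zero hc2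
    have hcn : c.norm = 1 := by
      have h6 := congrArg Zsqrtd.norm hc3
      rw [Zsqrtd.norm_conj, Zsqrtd.norm_mul, hnorm] at h6
      have h7 : (p : ℤ) * 1 = (p : ℤ) * c.norm := by linarith
      exact (mul_left_cancel₀ hq0 h7).symm
    have hcnd : c.re * c.re + c.im * c.im = 1 := by
      rw [Zsqrtd.norm_def] at hcn
      linarith
    have hE1 : γ.re = γ.re * c.re - γ.im * c.im := by
      have := congrArg Zsqrtd.re hc3
      simpa [Zsqrtd.re_mul, sub_eq_add_neg] using this
    have hE2 : -γ.im = γ.re * c.im + γ.im * c.re := by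
      have := congrArg Zsqrtd.im hc3
      simpa [Zsqrtd.im_mul] using this
    have hbr1 : -1 ≤ c.re := by nlinarith [sq_nonneg c.im, sq_nonneg (c.re + 1)]
    have hbr2 : c.re ≤ 1 := by nlinarith [sq_nonneg c.im, sq_nonneg (c.re - 1)]
    have hbi1 : -1 ≤ c.im := by nlinarith [sq_nonneg c.re, sq_nonneg (c.im + 1)]
    have hbi2 : c.im ≤ 1 := by nlinarith [sq_nonneg c.re, sq_nonneg (c.im - 1)]
    have h2dvd : ∀ z : ℤ, (p : ℤ) = 2 * (z * z) → False := by
      intro z hz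
      have h7 : ((2 : ℕ) : ℤ) ∣ (p : ℤ) := ⟨z * z, by exact_mod_cast hz⟩
      have h8 : 2 ∣ p := by exact_mod_cast h7
      rcases hq.eq_one_or_self_of_dvd 2 h8 with h | h <;> omega
    interval_cases hcre : c.re <;> interval_cases hcim : c.im
    · omega
    · -- c = -1 : γ.re = 0, p = γ.im²
      have h9 : γ.re = 0 := by linarith
      exact Stmt16Aux.int_not_sq hq γ.im (by linear_combination hnd2 - γ.re * h9)
    · omega
    · -- c = -i : γ.re = γ.im, p = 2γ.re²
      have h9 : γ.re - γ.im = 0 := by linarith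
      exact h2dvd γ.re (by linear_combination -hnd2 - (γ.im + γ.re) * h9)
    · omega
    · -- c = i : γ.re = -γ.im, p = 2γ.re²
      have h9 : γ.re + γ.im = 0 := by linarith
      exact h2dvd γ.re (by linear_combination -hnd2 + (γ.im - γ.re) * h9)
    · omega
    · -- c = 1 : γ.im = 0, p = γ.re²
      have h9 : γ.im = 0 := by linarith
      exact Stmt16Aux.int_not_sq hq γ.re (by linear_combination hnd2 - γ.im * h9)
    · omega

end Stmt16Aux

/-- Let `γ` be a Gaussian prime with `γ ∤ α` which is either an associate of a rational
prime `≡ 3 (mod 4)` or has norm a rational prime `≡ 1 (mod 4)`. With `d = ord(α; γ)`,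
`m = ν_γ(α^d − 1)` and `p = H(γ)`, for every `j ≥ 1` one has
`ord(α; γ^{m+j}) = p^j·d` and `ν_γ(α^{p^j d} − 1) = m + j`. -/
theorem stmt_16 (α γ : GaussianInt) (hγ : Irreducible γ) (hnd : ¬ γ ∣ α)
    (htype : (∃ q : ℕ, Nat.Prime q ∧ q % 4 = 3 ∧ Associated γ (q : GaussianInt)) ∨
      (∃ q : ℕ, Nat.Prime q ∧ q % 4 = 1 ∧ Zsqrtd.norm γ = (q : ℤ)))
    (d m p : ℕ) (hd : d = gOrd α γ)
    (hm : γ ^ m ∣ α ^ d - 1 ∧ ¬ γ ^ (m + 1) ∣ α ^ d - 1)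
    (hp : (p : ℤ) = denomHeight γ) :
    ∀ j : ℕ, 0 < j →
      gOrd α (γ ^ (m + j)) = p ^ j * d ∧
      γ ^ (m + j) ∣ α ^ (p ^ j * d) - 1 ∧ ¬ γ ^ (m + j + 1) ∣ α ^ (p ^ j * d) - 1 := by
  intro j hj
  obtain ⟨hpp, hodd, hγp, hγp2, hpnorm⟩ := Stmt16Aux.facts hγ htype hp
  have hprime : Prime γ := UniqueFactorizationMonoid.irreducible_iff_prime.mp hγ
  have hne := Stmt16Aux.exists_period hprime hnd hpp hγp
  obtain ⟨hdpos, hdvd1, hdmin⟩ := Stmt16Aux.gOrd_spec hprime hnd hne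
  rw [← hd] at hdpos hdvd1 hdmin
  have hm1 : 1 ≤ m := by
    by_contra h
    have hm0 : m = 0 := by omega
    subst hm0
    exact hm.2 (by simpa using hdvd1)
  have hiter := Stmt16Aux.iter_val hprime hpp hodd hγp hγp2 (α ^ d) m hm1 hm.1 hm.2
  have hkey : ∀ j' : ℕ, γ ^ (m + j') ∣ α ^ (p ^ j' * d) - 1 ∧
      ¬ γ ^ (m + j' + 1) ∣ α ^ (p ^ j' * d) - 1 := by
    intro j'
    have h0 := hiter j'
    rwa [← pow_mul, mul_comm d] at h0
  have hdvd_all : ∀ k, 0 < k → γ ^ (m + j) ∣ α ^ k - 1 → p ^ j * d ∣ k := by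
    intro k hk hkd
    have hγ1 : γ ∣ α ^ k - 1 := (dvd_pow_self γ (by omega : m + j ≠ 0)).trans hkd
    obtain ⟨t, rfl⟩ := hdmin k hk hγ1
    have ht0 : 0 < t := by
      rcases Nat.eq_zero_or_pos t with h | h
      · subst h; simp at hk
      · exact h
    set v := t.factorization p with hv
    set s := t / p ^ v with hs
    have hts : t = p ^ v * s := (Nat.ordProj_mul_ordCompl_eq_self t p).symm
    have hps : ¬ p ∣ s := Nat.not_dvd_ordCompl hpp ht0.ne'
    have hβ : α ^ (d * t) = ((α ^ d) ^ p ^ v) ^ s := by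
      rw [hts, ← pow_mul, ← pow_mul]
    have hval := Stmt16Aux.same_val hprime hpp hpnorm ((α ^ d) ^ p ^ v) (m + v) s
      (by omega) (hiter v).1 (hiter v).2 hps
    have hjv : j ≤ v := by
      by_contra hlt
      have hd2 : γ ^ (m + v + 1) ∣ α ^ (d * t) - 1 :=
        (pow_dvd_pow γ (by omega)).trans hkd
      rw [hβ] at hd2
      exact hval.2 hd2
    have hpj : p ^ j ∣ t := (pow_dvd_pow p hjv).trans ⟨s, hts⟩
    obtain ⟨r, hr⟩ := hpj
    exact ⟨r, by rw [hr]; ring⟩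
  refine ⟨?_, (hkey j).1, (hkey j).2⟩
  have hNpos : 0 < p ^ j * d := Nat.mul_pos (pow_pos hpp.pos j) hdpos
  have hmem : (p ^ j * d) ∈ {k : ℕ | 0 < k ∧ γ ^ (m + j) ∣ α ^ k - 1} := ⟨hNpos, (hkey j).1⟩
  have hle : gOrd α (γ ^ (m + j)) ≤ p ^ j * d := Nat.sInf_le hmem
  have hmem2 : gOrd α (γ ^ (m + j)) ∈ {k : ℕ | 0 < k ∧ γ ^ (m + j) ∣ α ^ k - 1} :=
    Nat.sInf_mem ⟨_, hmem⟩
  exact le_antisymm hle (Nat.le_of_dvd hmem2.1 (hdvd_all _ hmem2.1 hmem2.2))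
end
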